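/- The map β : (u₂, u₄, u_{6,1}, u_{6,2}) ↦ (β₂, β₄, β_{6,1}, β_{6,2}), defined on a neighborhood of the origin of ℝ⁴, is differentiable at the origin (the Gaussian fixed point), and its Jacobian matrix there equals [[−2, −6√(2π), 0, 0], [0, −1, −4√(2π), −16√(2π)], [0, 0, 0, 0], [0, 0, 0, 0]]; in particular this matrix has eigenvalues −2, −1, 0, 0, with respective eigenvectors (1,0,0,0), (−6√(2π),1,0,0), (0,0,−4,1) and (96π, −16√(2π), 0, 1). -/

import Mathlib

/-!  The truncated functional renormalization group flow of the rank-4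
`SU(2)` group field theory in the `φ⁶` necklace truncation
(Carrozza–Lahoche–Oriti). -/

open Real MeasureTheory

/-- The loop integral `f_k(u₂)`. -/
noncomputable def fInt (k : ℕ) (u : ℝ) : ℝ :=
  2 * Real.sqrt 2 * ∫ x in Set.Ioi (0 : ℝ),
    x ^ 6 * Real.exp (-x ^ 2) * (1 - Real.exp (-x ^ 2)) ^ (k - 1) /
      (x ^ 2 + u * (1 - Real.exp (-x ^ 2))) ^ (k + 1)

/-- The loop integral `g_k(u₂)`. -/
noncomputable def gInt (k : ℕ) (u : ℝ) : ℝ :=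
  2 * Real.sqrt 2 * ∫ x in Set.Ioi (0 : ℝ),
    x ^ 4 * Real.exp (-x ^ 2) * (1 - Real.exp (-x ^ 2)) ^ k /
      (x ^ 2 + u * (1 - Real.exp (-x ^ 2))) ^ (k + 1)

/-- The wave-function integral `f_w(u₂)`. -/
noncomputable def fw (u : ℝ) : ℝ :=
  9 * Real.sqrt 2 * ∫ x in Set.Ioi (0 : ℝ),
    Real.exp (-x ^ 2) * (x ^ 2 / (x ^ 2 + u * (1 - Real.exp (-x ^ 2)))) ^ 2

/-- The wave-function integral `g_w(u₂)`. -/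
noncomputable def gw (u : ℝ) : ℝ :=
  9 * Real.sqrt 2 * ∫ x in Set.Ioi (0 : ℝ),
    Real.exp (-x ^ 2) * (1 - Real.exp (-x ^ 2)) *
      (x / (x ^ 2 + u * (1 - Real.exp (-x ^ 2)))) ^ 2

/-- The anomalous dimension `η(u₂, u₄)`. -/
noncomputable def eta (u2 u4 : ℝ) : ℝ := fw u2 * u4 / (1 - gw u2 * u4 / 2)

/-- The loop coefficient `L_k(u₂, u₄) = 2 f_k(u₂) + η g_k(u₂)`. -/
noncomputable def Lk (k : ℕ) (u2 u4 : ℝ) : ℝ :=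
  2 * fInt k u2 + eta u2 u4 * gInt k u2

/-- The beta function `β₂`. -/
noncomputable def beta2 (u2 u4 : ℝ) : ℝ :=
  -(2 + eta u2 u4) * u2 - 6 * Lk 1 u2 u4 * u4

/-- The beta function `β₄`. -/
noncomputable def beta4 (u2 u4 u61 u62 : ℝ) : ℝ :=
  -(1 + 2 * eta u2 u4) * u4 - 4 * Lk 1 u2 u4 * (u61 + 4 * u62) +
    4 * Lk 2 u2 u4 * u4 ^ 2

/-- The beta function `β_{6,1}`. -/
noncomputable def beta61 (u2 u4 u61 : ℝ) : ℝ :=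
  -3 * eta u2 u4 * u61 + 12 * Lk 2 u2 u4 * u4 * u61 - 6 * Lk 3 u2 u4 * u4 ^ 3

/-- The beta function `β_{6,2}`. -/
noncomputable def beta62 (u2 u4 u62 : ℝ) : ℝ :=
  -3 * eta u2 u4 * u62 + 8 * Lk 2 u2 u4 * u4 * u62

/-- The truncated flow `(u₂, u₄, u_{6,1}, u_{6,2}) ↦ (β₂, β₄, β_{6,1}, β_{6,2})`. -/
noncomputable def betaMap : (Fin 4 → ℝ) → (Fin 4 → ℝ) := fun u =>
  ![beta2 (u 0) (u 1), beta4 (u 0) (u 1) (u 2) (u 3),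
    beta61 (u 0) (u 1) (u 2), beta62 (u 0) (u 1) (u 3)]

/-- The stability matrix of the truncated flow at the Gaussian fixed point. -/
noncomputable def gfpJac : Matrix (Fin 4) (Fin 4) ℝ :=
  !![-2, -6 * Real.sqrt (2 * π), 0, 0;
     0, -1, -4 * Real.sqrt (2 * π), -16 * Real.sqrt (2 * π);
     0, 0, 0, 0;
     0, 0, 0, 0]

section Auxiliary

open Set Filter Asymptotics Topology

lemma int_x2_val : ∫ x in Ioi (0:ℝ), x^2 * Real.exp (-x^2) = Real.sqrt π / 4 := by
  have h := integral_rpow_mul_exp_neg_rpow (p := 2) (q := 2) (by norm_num) (by norm_num)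
  have h2 : ∀ x : ℝ, x ^ (2:ℝ) = x ^ (2:ℕ) := fun x => by
    rw [← Real.rpow_natCast x 2]; norm_num
  rw [show (fun x : ℝ => x ^ (2:ℝ) * Real.exp (-x ^ (2:ℝ)))
      = fun x : ℝ => x ^ (2:ℕ) * Real.exp (-x ^ (2:ℕ)) by funext x; rw [h2]] at h
  rw [show ((2:ℝ)+1)/2 = 1/2 + 1 by norm_num, Real.Gamma_add_one (by norm_num),
    Real.Gamma_one_half_eq] at h
  norm_num at h ⊢
  rw [h]; ring

lemma int_x2 : IntegrableOn (fun x : ℝ => x^2 * Real.exp (-x^2)) (Ioi 0) := by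
  have h := integrableOn_rpow_mul_exp_neg_rpow (p := 2) (s := 2) (by norm_num) (by norm_num)
  refine h.congr_fun (fun x hx => ?_) measurableSet_Ioi
  rw [← Real.rpow_natCast x 2]; norm_num

lemma int_exp : IntegrableOn (fun x : ℝ => Real.exp (-x^2)) (Ioi 0) := by
  have h := (integrable_exp_neg_mul_sq (b := 1) one_pos).integrableOn (s := Ioi 0)
  refine h.congr_fun (fun x hx => ?_) measurableSet_Ioi
  norm_num

lemma e_nonneg (x : ℝ) : 0 ≤ 1 - Real.exp (-x^2) := by
  have : Real.exp (-x^2) ≤ 1 := Real.exp_le_one_iff.2 (neg_nonpos.2 (by positivity))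
  linarith

lemma e_le (x : ℝ) : 1 - Real.exp (-x^2) ≤ x^2 := by
  have := Real.add_one_le_exp (-x^2); linarith

lemma d_ge {u x : ℝ} (hu : |u| ≤ 1/2) : x^2/2 ≤ x^2 + u * (1 - Real.exp (-x^2)) := by
  obtain ⟨h1, h2⟩ := abs_le.1 hu
  have h3 := e_nonneg x; have h4 := e_le x
  nlinarith

lemma d_pos {u x : ℝ} (hu : |u| ≤ 1/2) (hx : 0 < x) :
    0 < x^2 + u * (1 - Real.exp (-x^2)) :=
  lt_of_lt_of_le (by positivity) (d_ge hu)

lemma ptwise_f {k : ℕ} (hk : 1 ≤ k) {u x : ℝ} (hu : |u| ≤ 1/2) (hx : 0 < x) :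
    0 ≤ x ^ 6 * Real.exp (-x ^ 2) * (1 - Real.exp (-x ^ 2)) ^ (k - 1) /
      (x ^ 2 + u * (1 - Real.exp (-x ^ 2))) ^ (k + 1) ∧
    x ^ 6 * Real.exp (-x ^ 2) * (1 - Real.exp (-x ^ 2)) ^ (k - 1) /
      (x ^ 2 + u * (1 - Real.exp (-x ^ 2))) ^ (k + 1)
      ≤ 2 ^ (k + 1) * (x ^ 2 * Real.exp (-x ^ 2)) := by
  obtain ⟨m, rfl⟩ := Nat.exists_eq_add_of_le hk
  have hE : (0:ℝ) < Real.exp (-x^2) := Real.exp_pos _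
  have he0 := e_nonneg x; have he1 := e_le x
  have hd := d_ge (x := x) hu
  have hd0 := d_pos hu hx
  have hx2 : (0:ℝ) < x^2 := by positivity
  constructor
  · exact div_nonneg (by positivity) (pow_nonneg hd0.le _)
  · simp only [Nat.add_sub_cancel_left] at *
    calc x ^ 6 * Real.exp (-x ^ 2) * (1 - Real.exp (-x ^ 2)) ^ m /
          (x ^ 2 + u * (1 - Real.exp (-x ^ 2))) ^ (1 + m + 1)
        ≤ x ^ 6 * Real.exp (-x ^ 2) * (x^2) ^ m / ((x^2/2) ^ (m + 2)) := by
          apply div_le_div₀ (by positivity)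
          · exact mul_le_mul_of_nonneg_left (pow_le_pow_left₀ he0 he1 m) (by positivity)
          · positivity
          · rw [show 1 + m + 1 = m + 2 by ring]
            exact pow_le_pow_left₀ (by positivity) hd _
      _ = 2 ^ (1 + m + 1) * (x ^ 2 * Real.exp (-x ^ 2)) := by
          rw [div_pow, pow_add, show 1 + m + 1 = m + 2 by ring]
          rw [div_eq_iff (by positivity)]
          field_simp

lemma ptwise_g (k : ℕ) {u x : ℝ} (hu : |u| ≤ 1/2) (hx : 0 < x) :
    0 ≤ x ^ 4 * Real.exp (-x ^ 2) * (1 - Real.exp (-x ^ 2)) ^ k /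
      (x ^ 2 + u * (1 - Real.exp (-x ^ 2))) ^ (k + 1) ∧
    x ^ 4 * Real.exp (-x ^ 2) * (1 - Real.exp (-x ^ 2)) ^ k /
      (x ^ 2 + u * (1 - Real.exp (-x ^ 2))) ^ (k + 1)
      ≤ 2 ^ (k + 1) * (x ^ 2 * Real.exp (-x ^ 2)) := by
  have hE : (0:ℝ) < Real.exp (-x^2) := Real.exp_pos _
  have he0 := e_nonneg x; have he1 := e_le x
  have hd := d_ge (x := x) hu
  have hd0 := d_pos hu hx
  have hx2 : (0:ℝ) < x^2 := by positivity
  constructor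
  · exact div_nonneg (by positivity) (pow_nonneg hd0.le _)
  · calc x ^ 4 * Real.exp (-x ^ 2) * (1 - Real.exp (-x ^ 2)) ^ k /
          (x ^ 2 + u * (1 - Real.exp (-x ^ 2))) ^ (k + 1)
        ≤ x ^ 4 * Real.exp (-x ^ 2) * (x^2) ^ k / ((x^2/2) ^ (k + 1)) := by
          apply div_le_div₀ (by positivity)
          · exact mul_le_mul_of_nonneg_left (pow_le_pow_left₀ he0 he1 k) (by positivity)
          · positivity
          · exact pow_le_pow_left₀ (by positivity) hd _
      _ = 2 ^ (k + 1) * (x ^ 2 * Real.exp (-x ^ 2)) := by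
          rw [div_pow, pow_add, div_eq_iff (by positivity)]
          field_simp

lemma ptwise_fw {u x : ℝ} (hu : |u| ≤ 1/2) (hx : 0 < x) :
    0 ≤ Real.exp (-x ^ 2) * (x ^ 2 / (x ^ 2 + u * (1 - Real.exp (-x ^ 2)))) ^ 2 ∧
    Real.exp (-x ^ 2) * (x ^ 2 / (x ^ 2 + u * (1 - Real.exp (-x ^ 2)))) ^ 2
      ≤ 4 * Real.exp (-x ^ 2) := by
  have hE : (0:ℝ) < Real.exp (-x^2) := Real.exp_pos _
  have hd := d_ge (x := x) hu
  have hd0 := d_pos hu hx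
  have hq : x ^ 2 / (x ^ 2 + u * (1 - Real.exp (-x ^ 2))) ≤ 2 := by
    rw [div_le_iff₀ hd0]; linarith
  have hq0 : 0 ≤ x ^ 2 / (x ^ 2 + u * (1 - Real.exp (-x ^ 2))) :=
    div_nonneg (by positivity) hd0.le
  constructor
  · positivity
  · have hq2 : (x ^ 2 / (x ^ 2 + u * (1 - Real.exp (-x ^ 2)))) ^ 2 ≤ 4 := by nlinarith
    nlinarith

lemma ptwise_gw {u x : ℝ} (hu : |u| ≤ 1/2) (hx : 0 < x) :
    0 ≤ Real.exp (-x ^ 2) * (1 - Real.exp (-x ^ 2)) *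
        (x / (x ^ 2 + u * (1 - Real.exp (-x ^ 2)))) ^ 2 ∧
    Real.exp (-x ^ 2) * (1 - Real.exp (-x ^ 2)) *
        (x / (x ^ 2 + u * (1 - Real.exp (-x ^ 2)))) ^ 2
      ≤ 4 * Real.exp (-x ^ 2) := by
  have hE : (0:ℝ) < Real.exp (-x^2) := Real.exp_pos _
  have he0 := e_nonneg x; have he1 := e_le x
  have hd := d_ge (x := x) hu
  have hd0 := d_pos hu hx
  have hx2 : (0:ℝ) < x^2 := by positivity
  constructor
  · positivity
  · have key : (1 - Real.exp (-x ^ 2)) *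
        (x / (x ^ 2 + u * (1 - Real.exp (-x ^ 2)))) ^ 2 ≤ 4 := by
      rw [div_pow, ← mul_div_assoc, div_le_iff₀ (by positivity)]
      nlinarith
    nlinarith

lemma abs_int_le {f g : ℝ → ℝ} (hg : IntegrableOn g (Ioi 0))
    (h : ∀ x ∈ Ioi (0:ℝ), 0 ≤ f x ∧ f x ≤ g x) :
    |∫ x in Ioi (0:ℝ), f x| ≤ ∫ x in Ioi (0:ℝ), g x := by
  have h0 : 0 ≤ᵐ[volume.restrict (Ioi 0)] f :=
    (ae_restrict_iff' measurableSet_Ioi).2 (ae_of_all _ fun x hx => (h x hx).1)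
  rw [abs_of_nonneg (integral_nonneg_of_ae h0)]
  exact integral_mono_of_nonneg h0 hg
    ((ae_restrict_iff' measurableSet_Ioi).2 (ae_of_all _ fun x hx => (h x hx).2))

lemma fInt_bdd {k : ℕ} (hk : 1 ≤ k) :
    ∃ C : ℝ, ∀ u : ℝ, |u| ≤ 1/2 → |fInt k u| ≤ C := by
  refine ⟨2 * Real.sqrt 2 * ∫ x in Ioi (0:ℝ), 2^(k+1) * (x^2 * Real.exp (-x^2)),
    fun u hu => ?_⟩
  unfold fInt
  rw [abs_mul, abs_of_nonneg (by positivity : (0:ℝ) ≤ 2 * Real.sqrt 2)]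
  exact mul_le_mul_of_nonneg_left
    (abs_int_le (int_x2.const_mul _) (fun x hx => ptwise_f hk hu hx)) (by positivity)

lemma gInt_bdd (k : ℕ) :
    ∃ C : ℝ, ∀ u : ℝ, |u| ≤ 1/2 → |gInt k u| ≤ C := by
  refine ⟨2 * Real.sqrt 2 * ∫ x in Ioi (0:ℝ), 2^(k+1) * (x^2 * Real.exp (-x^2)),
    fun u hu => ?_⟩
  unfold gInt
  rw [abs_mul, abs_of_nonneg (by positivity : (0:ℝ) ≤ 2 * Real.sqrt 2)]
  exact mul_le_mul_of_nonneg_left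
    (abs_int_le (int_x2.const_mul _) (fun x hx => ptwise_g k hu hx)) (by positivity)

lemma fw_bdd : ∃ C : ℝ, ∀ u : ℝ, |u| ≤ 1/2 → |fw u| ≤ C := by
  refine ⟨9 * Real.sqrt 2 * ∫ x in Ioi (0:ℝ), 4 * Real.exp (-x^2), fun u hu => ?_⟩
  unfold fw
  rw [abs_mul, abs_of_nonneg (by positivity : (0:ℝ) ≤ 9 * Real.sqrt 2)]
  exact mul_le_mul_of_nonneg_left
    (abs_int_le (int_exp.const_mul _) (fun x hx => ptwise_fw hu hx)) (by positivity)

lemma gw_bdd : ∃ C : ℝ, ∀ u : ℝ, |u| ≤ 1/2 → |gw u| ≤ C := by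
  refine ⟨9 * Real.sqrt 2 * ∫ x in Ioi (0:ℝ), 4 * Real.exp (-x^2), fun u hu => ?_⟩
  unfold gw
  rw [abs_mul, abs_of_nonneg (by positivity : (0:ℝ) ≤ 9 * Real.sqrt 2)]
  exact mul_le_mul_of_nonneg_left
    (abs_int_le (int_exp.const_mul _) (fun x hx => ptwise_gw hu hx)) (by positivity)

lemma ev_half : ∀ᶠ u in 𝓝 (0:ℝ), |u| ≤ 1/2 := by
  filter_upwards [eventually_abs_sub_lt (0:ℝ) (by norm_num : (0:ℝ) < 1/2)] with u hu
  rw [sub_zero] at hu; exact hu.le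

lemma fInt_one_contAt : ContinuousAt (fInt 1) 0 := by
  have key : ContinuousAt (fun u : ℝ => ∫ x in Ioi (0:ℝ),
      x ^ 6 * Real.exp (-x ^ 2) * (1 - Real.exp (-x ^ 2)) ^ (1 - 1) /
        (x ^ 2 + u * (1 - Real.exp (-x ^ 2))) ^ (1 + 1)) 0 := by
    apply continuousAt_of_dominated
      (bound := fun x => 2^(1+1:ℕ) * (x^2 * Real.exp (-x^2)))
    · apply Eventually.of_forall
      intro u
      apply Measurable.aestronglyMeasurable
      apply Measurable.div <;> fun_prop
    · filter_upwards [ev_half] with u hu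
      refine (ae_restrict_iff' measurableSet_Ioi).2 (ae_of_all _ fun x hx => ?_)
      rw [Real.norm_eq_abs, abs_of_nonneg (ptwise_f le_rfl hu hx).1]
      exact (ptwise_f le_rfl hu hx).2
    · exact int_x2.const_mul _
    · refine (ae_restrict_iff' measurableSet_Ioi).2 (ae_of_all _ fun x hx => ?_)
      apply ContinuousAt.div continuousAt_const
      · fun_prop
      · have hx : (0:ℝ) < x := hx
        have : x ^ 2 + 0 * (1 - Real.exp (-x ^ 2)) = x^2 := by ring
        rw [this]
        positivity
  unfold fInt
  exact continuousAt_const.mul key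

lemma fInt_one_zero : fInt 1 0 = Real.sqrt (2*π) / 2 := by
  unfold fInt
  rw [setIntegral_congr_fun (g := fun x : ℝ => x^2 * Real.exp (-x^2)) measurableSet_Ioi
    (fun x hx => ?_)]
  · rw [int_x2_val, Real.sqrt_mul (by norm_num) π]
    ring
  · have hx0 : x ≠ 0 := ne_of_gt hx
    simp only [pow_zero, Nat.sub_self, zero_mul, add_zero, mul_one]
    field_simp
    ring

end Auxiliary

section Main

open Set Filter Asymptotics Topology

lemma bdd_mul {α : Type*} {l : Filter α} {f g : α → ℝ}
    (hf : ∃ C, ∀ᶠ u in l, |f u| ≤ C) (hg : Tendsto g l (𝓝 0)) :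
    Tendsto (fun u => f u * g u) l (𝓝 0) := by
  obtain ⟨C, hC⟩ := hf
  apply squeeze_zero_norm' (a := fun u => C * |g u|)
  · filter_upwards [hC] with u hu
    rw [Real.norm_eq_abs, abs_mul]
    exact mul_le_mul_of_nonneg_right hu (abs_nonneg _)
  · simpa using hg.abs.const_mul C

lemma key {j : Fin 4} {a : (Fin 4 → ℝ) → ℝ} (ha : Tendsto a (𝓝 0) (𝓝 0)) :
    (fun u : Fin 4 → ℝ => a u * u j) =o[𝓝 0] (fun u => u) := by
  rw [← isLittleO_norm_right]
  have h1 : a =o[𝓝 (0 : Fin 4 → ℝ)] (fun _ => (1:ℝ)) := (isLittleO_one_iff ℝ).2 ha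
  have h2 : (fun u : Fin 4 → ℝ => u j) =O[𝓝 0] (fun u => ‖u‖) := by
    apply isBigO_of_le
    intro u
    rw [norm_norm]
    exact norm_le_pi_norm u j
  simpa using h1.mul_isBigO h2

lemma coord_tendsto (j : Fin 4) :
    Tendsto (fun u : Fin 4 → ℝ => u j) (𝓝 0) (𝓝 (0:ℝ)) := by
  simpa using (continuous_apply j).tendsto (0 : Fin 4 → ℝ)

lemma lift_bdd {F : ℝ → ℝ} (h : ∃ C, ∀ v : ℝ, |v| ≤ 1/2 → |F v| ≤ C) :
    ∃ C, ∀ᶠ u in 𝓝 (0 : Fin 4 → ℝ), |F (u 0)| ≤ C := by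
  obtain ⟨C, hC⟩ := h
  refine ⟨C, ?_⟩
  filter_upwards [(coord_tendsto 0).eventually ev_half] with u hu
  exact hC _ hu

lemma eta_tendsto : Tendsto (fun u : Fin 4 → ℝ => eta (u 0) (u 1)) (𝓝 0) (𝓝 0) := by
  have hnum : Tendsto (fun u : Fin 4 → ℝ => fw (u 0) * u 1) (𝓝 0) (𝓝 0) :=
    bdd_mul (lift_bdd fw_bdd) (coord_tendsto 1)
  have hgw : Tendsto (fun u : Fin 4 → ℝ => gw (u 0) * u 1) (𝓝 0) (𝓝 0) :=
    bdd_mul (lift_bdd gw_bdd) (coord_tendsto 1)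
  have hden : Tendsto (fun u : Fin 4 → ℝ => 1 - gw (u 0) * u 1 / 2) (𝓝 0) (𝓝 1) := by
    have := (tendsto_const_nhds (x := (1:ℝ))
      (f := 𝓝 (0 : Fin 4 → ℝ))).sub (hgw.div_const 2)
    simpa using this
  have := hnum.div hden one_ne_zero
  rw [zero_div] at this
  exact this

lemma Lk_bdd {k : ℕ} (hk : 1 ≤ k) :
    ∃ C, ∀ᶠ u in 𝓝 (0 : Fin 4 → ℝ), |Lk k (u 0) (u 1)| ≤ C := by
  obtain ⟨C1, hC1⟩ := lift_bdd (fInt_bdd hk)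
  obtain ⟨C2, hC2⟩ := lift_bdd (gInt_bdd k)
  have hetaev : ∀ᶠ u in 𝓝 (0 : Fin 4 → ℝ), |eta (u 0) (u 1)| ≤ 1/2 :=
    eta_tendsto.eventually ev_half
  refine ⟨2 * C1 + (1/2) * C2, ?_⟩
  filter_upwards [hC1, hC2, hetaev] with u h1 h2 h3
  have habs : |Lk k (u 0) (u 1)| ≤
      2 * |fInt k (u 0)| + |eta (u 0) (u 1)| * |gInt k (u 0)| := by
    unfold Lk
    refine (abs_add_le _ _).trans ?_
    rw [abs_mul, abs_mul]
    norm_num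
  have hmul : |eta (u 0) (u 1)| * |gInt k (u 0)| ≤ (1/2) * C2 :=
    mul_le_mul h3 h2 (abs_nonneg _) (by norm_num)
  linarith

lemma L1_tendsto : Tendsto (fun u : Fin 4 → ℝ => Lk 1 (u 0) (u 1)) (𝓝 0)
    (𝓝 (Real.sqrt (2*π))) := by
  have hf1 : Tendsto (fun u : Fin 4 → ℝ => fInt 1 (u 0)) (𝓝 0)
      (𝓝 (Real.sqrt (2*π) / 2)) := by
    have := fInt_one_contAt.tendsto.comp (coord_tendsto 0)
    rw [fInt_one_zero] at this
    exact this
  have heq : (fun u : Fin 4 → ℝ => Lk 1 (u 0) (u 1)) =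
      fun u => 2 * fInt 1 (u 0) + gInt 1 (u 0) * eta (u 0) (u 1) := by
    funext u; unfold Lk; ring
  rw [heq]
  have h := (hf1.const_mul (2:ℝ)).add (bdd_mul (lift_bdd (gInt_bdd 1)) eta_tendsto)
  rw [show 2 * (Real.sqrt (2*π) / 2) + 0 = Real.sqrt (2*π) by ring] at h
  exact h

end Main

section MainThm

open Set Filter Asymptotics Topology

/-- **Linearization at the Gaussian fixed point.** -/
theorem gaussian_fixed_point_linearization :
    HasFDerivAt betaMap
      (LinearMap.toContinuousLinearMap (Matrix.mulVecLin gfpJac)) 0 ∧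
    gfpJac.mulVec ![1, 0, 0, 0] = (-2 : ℝ) • ![1, 0, 0, 0] ∧
    gfpJac.mulVec ![-6 * Real.sqrt (2 * π), 1, 0, 0] =
      (-1 : ℝ) • ![-6 * Real.sqrt (2 * π), 1, 0, 0] ∧
    gfpJac.mulVec ![0, 0, -4, 1] = (0 : ℝ) • ![0, 0, -4, 1] ∧
    gfpJac.mulVec ![96 * π, -16 * Real.sqrt (2 * π), 0, 1] =
      (0 : ℝ) • ![96 * π, -16 * Real.sqrt (2 * π), 0, 1] := by
  have h2π : Real.sqrt (2*π) * Real.sqrt (2*π) = 2*π :=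
    Real.mul_self_sqrt (by positivity)
  refine ⟨?_, ?_, ?_, ?_, ?_⟩
  · -- differentiability
    rw [hasFDerivAt_iff_isLittleO_nhds_zero]
    have heta0 : eta 0 0 = 0 := by simp [eta]
    have hmap0 : betaMap 0 = 0 := by
      funext i
      fin_cases i <;>
        simp [betaMap, beta2, beta4, beta61, beta62, heta0]
    set A := LinearMap.toContinuousLinearMap (Matrix.mulVecLin gfpJac) with hA
    have hfun : (fun h : Fin 4 → ℝ => betaMap (0 + h) - betaMap 0 - A h) =
        fun h => betaMap h - A h := by
      funext h; rw [zero_add, hmap0, sub_zero]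
    rw [hfun, isLittleO_pi]
    have hu1 := coord_tendsto 1
    have heta := eta_tendsto
    have hL1 : Tendsto (fun u : Fin 4 → ℝ => Lk 1 (u 0) (u 1) - Real.sqrt (2*π))
        (𝓝 0) (𝓝 0) := by simpa using L1_tendsto.sub_const (Real.sqrt (2*π))
    have hL2 : Tendsto (fun u : Fin 4 → ℝ => Lk 2 (u 0) (u 1) * u 1) (𝓝 0) (𝓝 0) :=
      bdd_mul (Lk_bdd (by norm_num)) hu1
    have hL3 : Tendsto (fun u : Fin 4 → ℝ => Lk 3 (u 0) (u 1) * u 1) (𝓝 0) (𝓝 0) :=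
      bdd_mul (Lk_bdd (by norm_num)) hu1
    intro i
    fin_cases i
    · -- component 0
      show (fun u : Fin 4 → ℝ => (betaMap u - A u) 0) =o[𝓝 0] fun h : Fin 4 → ℝ => h
      have H : (fun u : Fin 4 → ℝ => (betaMap u - A u) 0) =
          fun u => (-(eta (u 0) (u 1))) * u 0 +
            (-6 * (Lk 1 (u 0) (u 1) - Real.sqrt (2*π))) * u 1 := by
        funext u
        simp [hA, betaMap, beta2, gfpJac, Matrix.mulVec, dotProduct,
          Fin.sum_univ_four]
        ring
      rw [H]
      exact (key (by simpa using heta.neg)).add (key (by simpa using hL1.const_mul (-6:ℝ)))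
    · -- component 1
      show (fun u : Fin 4 → ℝ => (betaMap u - A u) 1) =o[𝓝 0] fun h : Fin 4 → ℝ => h
      have H : (fun u : Fin 4 → ℝ => (betaMap u - A u) 1) =
          fun u => (-2 * eta (u 0) (u 1) + 4 * (Lk 2 (u 0) (u 1) * u 1)) * u 1 +
            ((-4 * (Lk 1 (u 0) (u 1) - Real.sqrt (2*π))) * u 2 +
             (-16 * (Lk 1 (u 0) (u 1) - Real.sqrt (2*π))) * u 3) := by
        funext u
        simp [hA, betaMap, beta4, gfpJac, Matrix.mulVec, dotProduct,
          Fin.sum_univ_four]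
        ring
      rw [H]
      refine (key ?_).add ((key ?_).add (key ?_))
      · simpa using (heta.const_mul (-2:ℝ)).add (hL2.const_mul (4:ℝ))
      · simpa using hL1.const_mul (-4:ℝ)
      · simpa using hL1.const_mul (-16:ℝ)
    · -- component 2
      show (fun u : Fin 4 → ℝ => (betaMap u - A u) 2) =o[𝓝 0] fun h : Fin 4 → ℝ => h
      have H : (fun u : Fin 4 → ℝ => (betaMap u - A u) 2) =
          fun u => (-3 * eta (u 0) (u 1) + 12 * (Lk 2 (u 0) (u 1) * u 1)) * u 2 +
            (-6 * (Lk 3 (u 0) (u 1) * u 1 * u 1)) * u 1 := by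
        funext u
        simp [hA, betaMap, beta61, gfpJac, Matrix.mulVec, dotProduct,
          Fin.sum_univ_four]
        ring
      rw [H]
      refine (key ?_).add (key ?_)
      · simpa using (heta.const_mul (-3:ℝ)).add (hL2.const_mul (12:ℝ))
      · simpa using (hL3.mul hu1).const_mul (-6:ℝ)
    · -- component 3
      show (fun u : Fin 4 → ℝ => (betaMap u - A u) 3) =o[𝓝 0] fun h : Fin 4 → ℝ => h
      have H : (fun u : Fin 4 → ℝ => (betaMap u - A u) 3) =
          fun u => (-3 * eta (u 0) (u 1) + 8 * (Lk 2 (u 0) (u 1) * u 1)) * u 3 := by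
        funext u
        simp [hA, betaMap, beta62, gfpJac, Matrix.mulVec, dotProduct,
          Fin.sum_univ_four]
        ring
      rw [H]
      exact key (by simpa using (heta.const_mul (-3:ℝ)).add (hL2.const_mul (8:ℝ)))
  · funext i
    fin_cases i <;>
      simp [gfpJac, Matrix.mulVec, dotProduct, Fin.sum_univ_four,
        Matrix.vecHead, Matrix.vecTail]
  · funext i
    fin_cases i <;>
      simp [gfpJac, Matrix.mulVec, dotProduct, Fin.sum_univ_four,
        Matrix.vecHead, Matrix.vecTail] <;> ring
  · funext i
    fin_cases i <;>
      simp [gfpJac, Matrix.mulVec, dotProduct, Fin.sum_univ_four,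
        Matrix.vecHead, Matrix.vecTail] <;> ring
  · have s2 : Real.sqrt 2 * Real.sqrt 2 = 2 := Real.mul_self_sqrt (by norm_num)
    have sp : Real.sqrt π * Real.sqrt π = π := Real.mul_self_sqrt Real.pi_pos.le
    funext i
    fin_cases i <;>
      simp [gfpJac, Matrix.mulVec, dotProduct, Fin.sum_univ_four,
        Matrix.vecHead, Matrix.vecTail] <;>
      nlinarith [s2, sp, Real.sqrt_nonneg 2, Real.sqrt_nonneg π]

end MainThm
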